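/- Let Z be a complete metric space and f₁, ..., fₘ : Z → Z contractions (m ≥ 2, each with Lipschitz constant < 1). Then there exists a unique nonempty compact set X ⊆ Z with ⋃ⱼ fⱼ(X) = X. -/

import Mathlib

open scoped NNReal ENNReal

open EMetric Set

lemma infEdist_image_le_lipschitz {Z : Type*} [MetricSpace Z] {g : Z → Z} {β : ℝ≥0}
    (hg : LipschitzWith β g) {t : Set Z} (ht : IsCompact t) (htne : t.Nonempty) (a : Z) :
    infEdist (g a) (g '' t) ≤ (β : ℝ≥0∞) * infEdist a t := by
  obtain ⟨b, hb, hab⟩ := ht.exists_infEdist_eq_edist htne a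
  calc infEdist (g a) (g '' t) ≤ edist (g a) (g b) :=
        infEdist_le_edist_of_mem (mem_image_of_mem _ hb)
    _ ≤ (β : ℝ≥0∞) * edist a b := hg a b
    _ = (β : ℝ≥0∞) * infEdist a t := by exact congrArg (fun x => (β : ℝ≥0∞) * x) hab.symm

/-- Hutchinson's theorem: a finite family of contractions on a nonempty complete
metric space has a unique nonempty compact attractor. -/
theorem stmt_8 {Z : Type*} [MetricSpace Z] [CompleteSpace Z] [Nonempty Z]
    (m : ℕ) (hm : 2 ≤ m) (f : Fin m → Z → Z) (α : Fin m → ℝ≥0)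
    (hα : ∀ j, α j < 1) (hf : ∀ j, LipschitzWith (α j) (f j)) :
    ∃! X : Set Z, X.Nonempty ∧ IsCompact X ∧ (⋃ j, f j '' X) = X := by
  have hmpos : 0 < m := by omega
  haveI : NeZero m := ⟨by omega⟩
  haveI : Nonempty (Fin m) := ⟨⟨0, hmpos⟩⟩
  set c : ℝ≥0 := Finset.univ.sup α with hc
  have hαc : ∀ j, α j ≤ c := fun j => Finset.le_sup (Finset.mem_univ j)
  have hc1 : c < 1 := by
    rw [hc, Finset.sup_lt_iff (by norm_num : (⊥ : ℝ≥0) < 1)]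
    exact fun j _ => hα j
  -- the Hutchinson operator on nonempty compacts
  have Fcompact : ∀ X : TopologicalSpace.NonemptyCompacts Z,
      IsCompact (⋃ j, f j '' (X : Set Z)) := fun X =>
    isCompact_iUnion fun j => X.isCompact.image (hf j).continuous
  have Fne : ∀ X : TopologicalSpace.NonemptyCompacts Z,
      (⋃ j, f j '' (X : Set Z)).Nonempty := fun X =>
    ⟨f ⟨0, hmpos⟩ X.nonempty.choose, mem_iUnion.2 ⟨⟨0, hmpos⟩,
      mem_image_of_mem _ X.nonempty.choose_spec⟩⟩
  set F : TopologicalSpace.NonemptyCompacts Z → TopologicalSpace.NonemptyCompacts Z :=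
    fun X => ⟨⟨⋃ j, f j '' (X : Set Z), Fcompact X⟩, Fne X⟩ with hF
  -- key estimate
  have key : ∀ X Y : TopologicalSpace.NonemptyCompacts Z,
      hausdorffEdist (⋃ j, f j '' (X : Set Z)) (⋃ j, f j '' (Y : Set Z))
        ≤ (c : ℝ≥0∞) * hausdorffEdist (X : Set Z) (Y : Set Z) := by
    intro X Y
    apply hausdorffEdist_le_of_infEdist
    · rintro x hx
      obtain ⟨j, a, ha, rfl⟩ := by simpa only [mem_iUnion, mem_image] using hx
      calc infEdist (f j a) (⋃ k, f k '' (Y : Set Z))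
          ≤ infEdist (f j a) (f j '' (Y : Set Z)) :=
            infEdist_anti (subset_iUnion (fun k => f k '' (Y : Set Z)) j)
        _ ≤ (α j : ℝ≥0∞) * infEdist a (Y : Set Z) :=
            infEdist_image_le_lipschitz (hf j) Y.isCompact Y.nonempty a
        _ ≤ (c : ℝ≥0∞) * hausdorffEdist (X : Set Z) (Y : Set Z) :=
            mul_le_mul' (ENNReal.coe_le_coe.2 (hαc j))
              (infEdist_le_hausdorffEdist_of_mem ha)
    · rintro y hy
      obtain ⟨j, a, ha, rfl⟩ := by simpa only [mem_iUnion, mem_image] using hy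
      calc infEdist (f j a) (⋃ k, f k '' (X : Set Z))
          ≤ infEdist (f j a) (f j '' (X : Set Z)) :=
            infEdist_anti (subset_iUnion (fun k => f k '' (X : Set Z)) j)
        _ ≤ (α j : ℝ≥0∞) * infEdist a (X : Set Z) :=
            infEdist_image_le_lipschitz (hf j) X.isCompact X.nonempty a
        _ ≤ (c : ℝ≥0∞) * hausdorffEdist (X : Set Z) (Y : Set Z) := by
            rw [show hausdorffEdist (X : Set Z) (Y : Set Z) = hausdorffEdist (Y : Set Z) (X : Set Z) from hausdorffEdist_comm]
            exact mul_le_mul' (ENNReal.coe_le_coe.2 (hαc j))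
              (infEdist_le_hausdorffEdist_of_mem ha)
  have hFlip : LipschitzWith c F := by
    intro X Y
    have hXY : edist (F X) (F Y)
        = hausdorffEdist (⋃ j, f j '' (X : Set Z)) (⋃ j, f j '' (Y : Set Z)) := rfl
    have hXY2 : edist X Y = hausdorffEdist (X : Set Z) (Y : Set Z) := rfl
    rw [hXY, hXY2]
    exact key X Y
  have hcontr : ContractingWith c F := ⟨hc1, hFlip⟩
  haveI : Nonempty (TopologicalSpace.NonemptyCompacts Z) :=
    ⟨⟨⟨{Classical.arbitrary Z}, isCompact_singleton⟩, singleton_nonempty _⟩⟩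
  set X₀ := hcontr.fixedPoint F with hX₀
  have hfix : F X₀ = X₀ := hcontr.fixedPoint_isFixedPt
  refine ⟨(X₀ : Set Z), ⟨X₀.nonempty, X₀.isCompact, ?_⟩, ?_⟩
  · exact congrArg (fun A : TopologicalSpace.NonemptyCompacts Z => (A : Set Z)) hfix
  · rintro Y ⟨hYne, hYcomp, hYeq⟩
    set Yc : TopologicalSpace.NonemptyCompacts Z := ⟨⟨Y, hYcomp⟩, hYne⟩ with hYc
    have : F Yc = Yc := by
      apply TopologicalSpace.NonemptyCompacts.ext
      exact hYeq
    have h2 : Yc = X₀ := hcontr.fixedPoint_unique this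
    exact congrArg (fun A : TopologicalSpace.NonemptyCompacts Z => (A : Set Z)) h2
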